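/- For A > 0, the function g(x, y) = log₂(1 + A/(x·y)) is convex on (0,∞) × (0,∞). -/

import Mathlib

open Real

lemma aux_hasDerivAt (A : ℝ) (hA : 0 < A) (t : ℝ) :
    HasDerivAt (fun t : ℝ => Real.log (A + Real.exp t)) (Real.exp t / (A + Real.exp t)) t := by
  have h1 : HasDerivAt (fun t : ℝ => A + Real.exp t) (Real.exp t) t :=
    (Real.hasDerivAt_exp t).const_add A
  have h2 := h1.log (by positivity)
  simpa using h2

lemma aux_convex (A : ℝ) (hA : 0 < A) :
    ConvexOn ℝ Set.univ (fun t : ℝ => Real.log (A + Real.exp t)) := by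
  have hd : deriv (fun t : ℝ => Real.log (A + Real.exp t))
      = fun t => Real.exp t / (A + Real.exp t) := by
    funext t; exact (aux_hasDerivAt A hA t).deriv
  apply convexOn_univ_of_deriv2_nonneg
  · exact fun t => (aux_hasDerivAt A hA t).differentiableAt
  · rw [hd]
    intro t
    have h1 : HasDerivAt (fun t : ℝ => A + Real.exp t) (Real.exp t) t :=
      (Real.hasDerivAt_exp t).const_add A
    exact ((Real.hasDerivAt_exp t).div h1 (by positivity)).differentiableAt
  · intro t
    rw [Function.iterate_succ, Function.iterate_one, Function.comp_apply, hd]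
    have h1 : HasDerivAt (fun t : ℝ => A + Real.exp t) (Real.exp t) t :=
      (Real.hasDerivAt_exp t).const_add A
    have h2 := (Real.hasDerivAt_exp t).div h1 (by positivity : (A + Real.exp t) ≠ 0)
    rw [show (fun t : ℝ => Real.exp t / (A + Real.exp t)) = Real.exp / (fun t : ℝ => A + Real.exp t) from rfl, h2.deriv]
    have hpos : (0:ℝ) < A + Real.exp t := by positivity
    have heq : Real.exp t * (A + Real.exp t) - Real.exp t * Real.exp t = A * Real.exp t := by ring
    rw [heq]
    positivity

lemma aux_key (A : ℝ) (hA : 0 < A) (t : ℝ) :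
    Real.log (A + Real.exp t) - t = Real.log (1 + A * Real.exp (-t)) := by
  have h1 : (1 : ℝ) + A * Real.exp (-t) = (A + Real.exp t) * Real.exp (-t) := by
    rw [add_mul, ← Real.exp_add]
    simp [mul_comm, add_comm]
  rw [h1, Real.log_mul (by positivity) (Real.exp_ne_zero _), Real.log_exp]
  ring

theorem stmt_5 (A : ℝ) (hA : 0 < A) :
    ConvexOn ℝ (Set.Ioi (0 : ℝ) ×ˢ Set.Ioi (0 : ℝ))
      (fun p : ℝ × ℝ => Real.logb 2 (1 + A / (p.1 * p.2))) := by
  set f : ℝ → ℝ := fun t => (Real.log (A + Real.exp t) - t) / Real.log 2 with hf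
  have hlog2 : (0:ℝ) < Real.log 2 := Real.log_pos (by norm_num)
  -- f is convex on univ
  have hfconv : ConvexOn ℝ Set.univ f := by
    have h2 : ConvexOn ℝ Set.univ (fun t : ℝ => -t) :=
      (concaveOn_id convex_univ).neg
    have h1 : ConvexOn ℝ Set.univ (fun t : ℝ => Real.log (A + Real.exp t) + -t) :=
      (aux_convex A hA).add h2
    have := h1.smul (by positivity : (0:ℝ) ≤ (Real.log 2)⁻¹)
    convert this using 2 with t
    · rfl
    · rfl
    · simp [hf, div_eq_mul_inv, sub_eq_add_neg, mul_comm]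
  -- f is antitone
  have hfanti : Antitone f := by
    intro s t hst
    apply div_le_div_of_nonneg_right _ hlog2.le
    rw [aux_key A hA, aux_key A hA]
    apply Real.log_le_log (by positivity)
    have h := Real.exp_le_exp.mpr (neg_le_neg hst)
    nlinarith
  -- g agrees with f ∘ L on the set
  have hgL : ∀ p : ℝ × ℝ, p ∈ Set.Ioi (0:ℝ) ×ˢ Set.Ioi (0:ℝ) →
      Real.logb 2 (1 + A / (p.1 * p.2)) = f (Real.log p.1 + Real.log p.2) := by
    rintro ⟨x, y⟩ ⟨hx, hy⟩
    simp only [Set.mem_Ioi] at hx hy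
    have hxy : (0:ℝ) < x * y := mul_pos hx hy
    have hexp : Real.exp (Real.log x + Real.log y) = x * y := by
      rw [Real.exp_add, Real.exp_log hx, Real.exp_log hy]
    simp only [hf, Real.logb, aux_key A hA]
    congr 2
    rw [Real.exp_neg, hexp, div_eq_mul_inv]
  -- L is concave on the set
  have hLconc : ∀ p ∈ Set.Ioi (0:ℝ) ×ˢ Set.Ioi (0:ℝ), ∀ q ∈ Set.Ioi (0:ℝ) ×ˢ Set.Ioi (0:ℝ),
      ∀ a b : ℝ, 0 ≤ a → 0 ≤ b → a + b = 1 →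
      a * (Real.log p.1 + Real.log p.2) + b * (Real.log q.1 + Real.log q.2) ≤
        Real.log (a • p + b • q).1 + Real.log (a • p + b • q).2 := by
    rintro ⟨x, y⟩ ⟨hx, hy⟩ ⟨u, v⟩ ⟨hu, hv⟩ a b ha hb hab
    have h1 := strictConcaveOn_log_Ioi.concaveOn.2 hx hu ha hb hab
    have h2 := strictConcaveOn_log_Ioi.concaveOn.2 hy hv ha hb hab
    simp only [smul_eq_mul, Prod.smul_mk, Prod.mk_add_mk] at h1 h2 ⊢
    linarith
  refine ⟨(convex_Ioi 0).prod (convex_Ioi 0), ?_⟩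
  intro p hp q hq a b ha hb hab
  have hmem : a • p + b • q ∈ Set.Ioi (0:ℝ) ×ˢ Set.Ioi (0:ℝ) :=
    ((convex_Ioi (0:ℝ)).prod (convex_Ioi 0)) hp hq ha hb hab
  show Real.logb 2 (1 + A / ((a • p + b • q).1 * (a • p + b • q).2)) ≤
    a • Real.logb 2 (1 + A / (p.1 * p.2)) + b • Real.logb 2 (1 + A / (q.1 * q.2))
  rw [hgL _ hmem, hgL _ hp, hgL _ hq, smul_eq_mul, smul_eq_mul]
  calc f (Real.log (a • p + b • q).1 + Real.log (a • p + b • q).2)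
      ≤ f (a * (Real.log p.1 + Real.log p.2) + b * (Real.log q.1 + Real.log q.2)) :=
        hfanti (hLconc p hp q hq a b ha hb hab)
    _ ≤ a * f (Real.log p.1 + Real.log p.2) + b * f (Real.log q.1 + Real.log q.2) := by
        have := hfconv.2 (Set.mem_univ (Real.log p.1 + Real.log p.2))
          (Set.mem_univ (Real.log q.1 + Real.log q.2)) ha hb hab
        simpa using this
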